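/- Let f : ℝ^d → ℝ be μ-strongly convex with L-Lipschitz Hessian and minimizer x*. If ‖x − x*‖_{∇²f(x*)} < ε·μ^{3/2}/L with ε ∈ (0,1), then the exact Newton step satisfies ‖x − x* − ∇²f(x)^{-1}∇f(x)‖_{∇²f(x)} ≤ ε·‖x − x*‖_{∇²f(x)}. -/

import Mathlib

open scoped RealInnerProductSpace

set_option maxHeartbeats 1600000 in
/-- Under the same assumptions as Statement 1, the exact Newton step
`p = ∇²f(x)⁻¹∇f(x)` satisfies `‖x − x* − p‖_{∇²f(x)} ≤ ε ‖x − x*‖_{∇²f(x)}`. -/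
theorem stmt2 {d : ℕ} (f : EuclideanSpace ℝ (Fin d) → ℝ) (μ L ε : ℝ)
    (xs x : EuclideanSpace ℝ (Fin d))
    (hf : ContDiff ℝ 2 f)
    (hμ : 0 < μ) (hL : 0 < L) (hε : ε ∈ Set.Ioo (0:ℝ) 1)
    (hsc : ∀ z v, μ * ‖v‖ ^ 2 ≤ ⟪v, fderiv ℝ (gradient f) z v⟫)
    (hlip : ∀ z w, ‖fderiv ℝ (gradient f) z - fderiv ℝ (gradient f) w‖ ≤ L * ‖z - w‖)
    (hmin : ∀ y, f xs ≤ f y)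
    (hnear : Real.sqrt ⟪x - xs, fderiv ℝ (gradient f) xs (x - xs)⟫
      < ε * μ ^ ((3:ℝ)/2) / L) :
    ∀ p : EuclideanSpace ℝ (Fin d), fderiv ℝ (gradient f) x p = gradient f x →
      Real.sqrt ⟪x - xs - p, fderiv ℝ (gradient f) x (x - xs - p)⟫
        ≤ ε * Real.sqrt ⟪x - xs, fderiv ℝ (gradient f) x (x - xs)⟫ := by
  intro p hp
  obtain ⟨hε0, hε1⟩ := hε
  -- the gradient is C¹
  have hg1 : ContDiff ℝ 1 (gradient f) := by
    have h1 : ContDiff ℝ 1 (fderiv ℝ f) := hf.fderiv_right (by norm_num)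
    exact (InnerProductSpace.toDual ℝ (EuclideanSpace ℝ (Fin d))).symm.contDiff.comp h1
  have hdiff : ∀ z, DifferentiableAt ℝ (gradient f) z :=
    fun z => (hg1.differentiable one_ne_zero) z
  -- the gradient vanishes at the minimizer
  have hxs0 : gradient f xs = 0 := by
    have hloc : IsLocalMin f xs := Filter.Eventually.of_forall fun y => hmin y
    have h0 : fderiv ℝ f xs = 0 := hloc.fderiv_eq_zero
    unfold gradient
    rw [h0, map_zero]
  -- mean value inequality on the segment
  have key : ‖gradient f x - gradient f xs - (fderiv ℝ (gradient f) x) (x - xs)‖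
      ≤ (L * ‖x - xs‖) * ‖x - xs‖ := by
    refine Convex.norm_image_sub_le_of_norm_fderiv_le' (fun z _ => hdiff z) ?_
      (convex_segment xs x) (left_mem_segment ℝ xs x) (right_mem_segment ℝ xs x)
    intro z hz
    have hzx : ‖z - x‖ ≤ ‖x - xs‖ := by
      obtain ⟨a, b, ha, hb, hab, rfl⟩ := hz
      have hb' : b = 1 - a := by linarith
      subst hb'
      have hz' : a • xs + (1 - a) • x - x = a • (xs - x) := by
        rw [smul_sub]; module
      rw [hz', norm_smul, Real.norm_eq_abs, abs_of_nonneg ha, norm_sub_rev]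
      have h1 : a ≤ 1 := by linarith
      nlinarith [norm_nonneg (x - xs), ha]
    calc ‖fderiv ℝ (gradient f) z - fderiv ℝ (gradient f) x‖ ≤ L * ‖z - x‖ := hlip z x
      _ ≤ L * ‖x - xs‖ := by nlinarith
  -- identify the residual
  have hre : (fderiv ℝ (gradient f) x) (x - xs - p)
      = -(gradient f x - gradient f xs - (fderiv ℝ (gradient f) x) (x - xs)) := by
    rw [map_sub, hp, hxs0]; abel
  have hrn : ‖(fderiv ℝ (gradient f) x) (x - xs - p)‖ ≤ L * ‖x - xs‖ * ‖x - xs‖ := by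
    rw [hre, norm_neg]; linarith [key]
  have hCS : ⟪x - xs - p, fderiv ℝ (gradient f) x (x - xs - p)⟫
      ≤ ‖x - xs - p‖ * ‖(fderiv ℝ (gradient f) x) (x - xs - p)‖ :=
    real_inner_le_norm _ _
  have h1 : μ * ‖x - xs - p‖^2 ≤ ⟪x - xs - p, fderiv ℝ (gradient f) x (x - xs - p)⟫ :=
    hsc x (x - xs - p)
  have hBv : μ * ‖x - xs‖^2 ≤ ⟪x - xs, fderiv ℝ (gradient f) x (x - xs)⟫ := hsc x (x - xs)
  have hBs : μ * ‖x - xs‖^2 ≤ ⟪x - xs, fderiv ℝ (gradient f) xs (x - xs)⟫ := hsc xs (x - xs)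
  have hnr0 : (0:ℝ) ≤ ‖(fderiv ℝ (gradient f) x) (x - xs - p)‖ := norm_nonneg _
  have hne0 : (0:ℝ) ≤ ‖x - xs - p‖ := norm_nonneg _
  have hnv0 : (0:ℝ) ≤ ‖x - xs‖ := norm_nonneg _
  set nr := ‖(fderiv ℝ (gradient f) x) (x - xs - p)‖ with hnr
  set ne' := ‖x - xs - p‖ with hne
  set nv := ‖x - xs‖ with hnv
  set A := ⟪x - xs - p, fderiv ℝ (gradient f) x (x - xs - p)⟫ with hA
  set B := ⟪x - xs, fderiv ℝ (gradient f) x (x - xs)⟫ with hB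
  clear_value nr ne' nv A B
  clear hnr hne hnv hA hB hp hre hdiff hg1 hxs0 key hsc hlip hmin hf
  -- bound ‖x - xs‖ via hnear
  have hvb : L * nv ≤ ε * μ := by
    have hc : 0 < ε * μ ^ ((3:ℝ)/2) / L := by positivity
    have h8 : ⟪x - xs, fderiv ℝ (gradient f) xs (x - xs)⟫
        < (ε * μ ^ ((3:ℝ)/2) / L)^2 := (Real.sqrt_lt' hc).mp hnear
    have h9 : (μ ^ ((3:ℝ)/2))^2 = μ^3 := by
      rw [← Real.rpow_natCast (μ ^ ((3:ℝ)/2)) 2, ← Real.rpow_mul hμ.le,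
        ← Real.rpow_natCast μ 3]
      norm_num
    have h10 : μ * nv^2 < ε^2 * μ^3 / L^2 := by
      have := hBs.trans_lt h8
      rw [div_pow, mul_pow, h9] at this
      linarith
    have h11 : (L * nv)^2 < (ε * μ)^2 := by
      have h12 : μ * nv^2 * L^2 < ε^2 * μ^3 := by
        have hL2 : (0:ℝ) < L^2 := by positivity
        calc μ * nv^2 * L^2 < (ε^2 * μ^3 / L^2) * L^2 :=
              mul_lt_mul_of_pos_right h10 hL2
          _ = ε^2 * μ^3 := by field_simp
      nlinarith [hμ]
    exact le_of_lt (lt_of_pow_lt_pow_left₀ 2 (by positivity) h11)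
  -- main estimates
  have h2 : μ * ne' ≤ nr := by nlinarith [h1.trans hCS]
  have hA0 : 0 ≤ A := le_trans (by positivity) h1
  have hB0 : 0 ≤ B := le_trans (by positivity) hBv
  -- squared inequality
  have hsq : A ≤ ε^2 * B := by
    have h4 : μ * A ≤ nr^2 := by
      nlinarith [mul_le_mul_of_nonneg_right h2 hnr0]
    have h6 : nr ≤ ε * μ * nv := by nlinarith [hrn, hvb, hnv0]
    have h7 : μ * A ≤ ε^2 * μ * (μ * nv^2) := by
      nlinarith [h4, mul_self_le_mul_self hnr0 h6]
    have h9' : ε^2 * μ * (μ * nv^2) ≤ ε^2 * μ * B :=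
      mul_le_mul_of_nonneg_left hBv (by positivity)
    have h8' : μ * A ≤ μ * (ε^2 * B) := by nlinarith [h7, h9']
    exact le_of_mul_le_mul_left h8' hμ
  calc Real.sqrt A ≤ Real.sqrt (ε^2 * B) := Real.sqrt_le_sqrt hsq
    _ = ε * Real.sqrt B := by
        rw [Real.sqrt_mul (by positivity), Real.sqrt_sq hε0.le]
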